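/- arXiv:2509.11331 — 2 statements merged into one kernel-verified Lean document; each statement's English description precedes it below -/
import Mathlib

section
/- Let G = (V, E) be a quasi-acyclic 2-path-bounded oriented graph without loops, multiple edges and triangles. Then η(G) ≥ 𝔯𝔥(G). -/
/-- An oriented graph: finite nonempty sets of vertices and edges with
origin and tail maps. -/
structure OrientedGraph where
  V : Type
  E : Type
  [fintypeV : Fintype V]
  [fintypeE : Fintype E]
  [nonemptyV : Nonempty V]
  [nonemptyE : Nonempty E]
  o : E → V
  t : E → V

attribute [instance] OrientedGraph.fintypeV OrientedGraph.fintypeE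
  OrientedGraph.nonemptyV OrientedGraph.nonemptyE

namespace OrientedGraph

variable (G : OrientedGraph)

/-- `G.IsPath p u v` : the edge sequence `p` is a path from `u` to `v`
(consecutive edges are composable; paths of length 0 at any vertex are allowed). -/
def IsPath (p : List G.E) (u v : G.V) : Prop :=
  List.Chain' (fun e f => G.t e = G.o f) p ∧
  ((p = [] ∧ u = v) ∨
    ∃ h : p ≠ [], u = G.o (p.head h) ∧ v = G.t (p.getLast h))

/-- The label of an edge sequence: the product of the labels of its edges
(the empty sequence maps to `1`). -/
def labelProd {M : Type} [Monoid M] (l : G.E → M) (s : List G.E) : M :=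
  (s.map l).prod

/-- The diagram `(G, l)` is commutative: any two paths with the same origin and
the same tail have equal labels. -/
def IsCommutative {M : Type} [Monoid M] (l : G.E → M) : Prop :=
  ∀ (u v : G.V) (p₁ p₂ : List G.E),
    G.IsPath p₁ u v → G.IsPath p₂ u v → G.labelProd l p₁ = G.labelProd l p₂

/-- A complete system of relations for `G`: for every monoid `M` and every
labeling `l : E → M`, the diagram `(G, l)` is commutative iff all relations hold. -/
def IsComplete (R : Finset (List G.E × List G.E)) : Prop :=
  ∀ (M : Type) [Monoid M], ∀ l : G.E → M,
    G.IsCommutative l ↔ ∀ r ∈ R, G.labelProd l r.1 = G.labelProd l r.2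

/-- A minimal complete system of relations: no proper subset is complete. -/
def IsMinimalComplete (R : Finset (List G.E × List G.E)) : Prop :=
  G.IsComplete R ∧ ∀ R' : Finset (List G.E × List G.E), R' ⊂ R → ¬ G.IsComplete R'

/-- The commutativity rank `η(G)`: the minimal cardinality of a complete
system of relations for `G`. -/
noncomputable def eta : ℕ :=
  sInf {n : ℕ | ∃ R : Finset (List G.E × List G.E), G.IsComplete R ∧ R.card = n}

/-- `S'` is obtained from `S` by one multiplication. -/
def MulStep (S S' : Set (List G.E)) : Prop :=
  ∃ s ∈ S, ∃ s' ∈ S, S' = S ∪ {s ++ s'}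

/-- `G.mCost S S'` : the minimal number of multiplications needed to obtain `S'`
from `S` (`⊤` if impossible). -/
noncomputable def mCost (S S' : Set (List G.E)) : ℕ∞ :=
  sInf {k : ℕ∞ | ∃ n : ℕ, k = n ∧ ∃ f : ℕ → Set (List G.E),
    f 0 = S ∧ f n = S' ∧ ∀ i < n, G.MulStep (f i) (f (i + 1))}

/-- `S_R`: the set of all edge sequences appearing in the relations of `R`. -/
def relSet (R : Finset (List G.E × List G.E)) : Set (List G.E) :=
  {s | ∃ r ∈ R, s = r.1 ∨ s = r.2}

/-- `ℰ`: the empty sequence together with all one-edge sequences. -/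
def baseSet : Set (List G.E) :=
  {s | s = [] ∨ ∃ e : G.E, s = [e]}

/-- `m(R)`: the minimal number of multiplications needed to build all sequences
appearing in `R`, starting from `ℰ`. -/
noncomputable def mRel (R : Finset (List G.E × List G.E)) : ℕ∞ :=
  sInf {k : ℕ∞ | ∃ S : Set (List G.E), G.relSet R ⊆ S ∧ k = G.mCost G.baseSet S}

/-- The multiplication rank `ν(G)`. -/
noncomputable def nu : ℕ∞ :=
  sInf {k : ℕ∞ | ∃ R : Finset (List G.E × List G.E), G.IsComplete R ∧ k = G.mRel R}

/-- A 4-tuple of edges `(a, b, c, d)` forms a rhomboid. -/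
def IsRhomboid (r : G.E × G.E × G.E × G.E) : Prop :=
  G.o r.1 = G.o r.2.2.1 ∧ G.t r.2.1 = G.t r.2.2.2 ∧
  G.t r.1 = G.o r.2.1 ∧ G.t r.2.2.1 = G.o r.2.2.2 ∧
  G.o r.1 ≠ G.t r.1 ∧ G.o r.1 ≠ G.o r.2.2.2 ∧ G.o r.1 ≠ G.t r.2.2.2 ∧
  G.t r.1 ≠ G.o r.2.2.2 ∧ G.t r.1 ≠ G.t r.2.2.2 ∧ G.o r.2.2.2 ≠ G.t r.2.2.2

/-- Two rhomboids `(a, b, c, d)` and `(a', b', c', d')` are disjoint. -/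
def RhDisjoint (r r' : G.E × G.E × G.E × G.E) : Prop :=
  (r.1 ≠ r'.1 ∨ r.2.1 ≠ r'.2.1) ∧
  (r.1 ≠ r'.2.2.1 ∨ r.2.1 ≠ r'.2.2.2) ∧
  (r.2.2.1 ≠ r'.2.2.1 ∨ r.2.2.2 ≠ r'.2.2.2) ∧
  (r.2.2.1 ≠ r'.1 ∨ r.2.2.2 ≠ r'.2.1)

/-- `𝔯𝔥(G)`: the maximal cardinality of a family of pairwise disjoint rhomboids in `G`. -/
noncomputable def rhNum : ℕ :=
  sSup {n : ℕ | ∃ F : Finset (G.E × G.E × G.E × G.E),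
    (∀ r ∈ F, G.IsRhomboid r) ∧
    (∀ r ∈ F, ∀ r' ∈ F, r ≠ r' → G.RhDisjoint r r') ∧ F.card = n}

/-- `𝔏(G)`: the number of loops of `G`. -/
noncomputable def loopCount : ℕ :=
  Nat.card {e : G.E // G.o e = G.t e}

/-- `G` is quasi-acyclic: no directed cycle visiting two or more distinct vertices. -/
def QuasiAcyclic : Prop :=
  ∀ u v : G.V, u ≠ v →
    ∀ p q : List G.E, G.IsPath p u v → G.IsPath q v u → False

/-- `G` is 2-path-bounded: every oriented path avoiding loop edges has length at most 2. -/
def TwoPathBounded : Prop :=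
  ∀ (p : List G.E) (u v : G.V), G.IsPath p u v →
    (∀ e ∈ p, G.o e ≠ G.t e) → p.length ≤ 2

/-- `G` has a pair of multiple edges. -/
def HasMultipleEdges : Prop :=
  ∃ e e' : G.E, e ≠ e' ∧ G.t e = G.t e' ∧ G.o e = G.o e' ∧ G.t e ≠ G.o e

/-- `G` has a triangle. -/
def HasTriangle : Prop :=
  ∃ a b c : G.E, G.o a = G.o b ∧ G.t b = G.o c ∧ G.t c = G.t a ∧
    G.o a ≠ G.t a ∧ G.o b ≠ G.t b ∧ G.o c ≠ G.t c

/-- `G` has no loops. -/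
def NoLoops : Prop := ∀ e : G.E, G.o e ≠ G.t e

/-- Every edge occurring on either side of the relation `r` is a loop. -/
def AllLoops (r : List G.E × List G.E) : Prop :=
  (∀ e ∈ r.1, G.o e = G.t e) ∧ (∀ e ∈ r.2, G.o e = G.t e)

/-- Both sides of the relation `r` contain at least one non-loop edge. -/
def BothSidesNonLoop (r : List G.E × List G.E) : Prop :=
  (∃ e ∈ r.1, G.o e ≠ G.t e) ∧ (∃ e ∈ r.2, G.o e ≠ G.t e)

end OrientedGraph

/-- The triploid `T(n₁, n₂, n₃, n₀, e)`. -/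
def Triploid (n₁ n₂ n₃ n₀ e : ℕ) (hn₁ : 0 < n₁) (he : n₂ * (n₁ + n₃) ≤ e)
    (he₀ : 0 < e) : OrientedGraph where
  V := Fin n₀ ⊕ Fin n₁ ⊕ Fin n₂ ⊕ Fin n₃
  E := (Fin n₁ × Fin n₂) ⊕ (Fin n₂ × Fin n₃) ⊕ Fin (e - n₂ * (n₁ + n₃))
  nonemptyV := ⟨Sum.inr (Sum.inl ⟨0, hn₁⟩)⟩
  nonemptyE := by
    by_cases h : n₂ * (n₁ + n₃) < e
    · exact ⟨Sum.inr (Sum.inr ⟨0, by omega⟩)⟩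
    · have h2 : 0 < n₂ := by
        rcases Nat.eq_zero_or_pos n₂ with h0 | h0
        · exfalso; subst h0; simp at h; omega
        · exact h0
      exact ⟨Sum.inl (⟨0, hn₁⟩, ⟨0, h2⟩)⟩
  o := Sum.elim (fun p => Sum.inr (Sum.inl p.1))
        (Sum.elim (fun p => Sum.inr (Sum.inr (Sum.inl p.1)))
          (fun _ => Sum.inr (Sum.inl ⟨0, hn₁⟩)))
  t := Sum.elim (fun p => Sum.inr (Sum.inr (Sum.inl p.2)))
        (Sum.elim (fun p => Sum.inr (Sum.inr (Sum.inr p.2)))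
          (fun _ => Sum.inr (Sum.inl ⟨0, hn₁⟩)))

open Relation

section Counting
variable {α : Type*} [DecidableEq α]

/-- Edge relation of a finite set of (directed) edges, symmetrized. -/
def erel (H : Finset (α × α)) : α → α → Prop := fun a b => (a, b) ∈ H ∨ (b, a) ∈ H

lemma erel_symm (H : Finset (α × α)) : Symmetric (erel H) := fun _ _ h => h.symm

lemma eqvGen_map (f : α → α) (H H' : Finset (α × α))
    (h : ∀ p ∈ H, f p.1 = f p.2 ∨ (f p.1, f p.2) ∈ H') :
    ∀ x y, EqvGen (erel H) x y → EqvGen (erel H') (f x) (f y) := by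
  intro x y hxy
  induction hxy with
  | rel a b hab =>
    rcases hab with hp | hp
    · rcases h _ hp with he | he
      · exact he ▸ EqvGen.refl _
      · exact EqvGen.rel _ _ (Or.inl he)
    · rcases h _ hp with he | he
      · exact he ▸ EqvGen.refl _
      · exact EqvGen.rel _ _ (Or.inr he)
  | refl a => exact EqvGen.refl _
  | symm a b _ ih => exact ih.symm _ _
  | trans a b c _ _ ih1 ih2 => exact ih1.trans _ _ _ ih2

lemma eqvGen_to_rtg {r : α → α → Prop} (hs : Symmetric r) {a b : α}
    (h : EqvGen r a b) : ReflTransGen r a b := by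
  induction h with
  | rel a b h => exact ReflTransGen.single h
  | refl a => exact ReflTransGen.refl
  | symm a b _ ih => exact (@ReflTransGen.stdSymm _ r ⟨fun _ _ h => hs h⟩).symm _ _ ih
  | trans a b c _ _ ih1 ih2 => exact ih1.trans ih2

lemma first_edge {r : α → α → Prop} {a b : α} (h : ReflTransGen r a b) :
    a ≠ b → ∃ z, z ≠ a ∧ r a z := by
  induction h using ReflTransGen.head_induction_on with
  | refl => exact fun h => absurd rfl h
  | head h' _ ih =>
    rename_i x c _
    intro _
    by_cases hxc : c = x
    · subst hxc; exact ih ‹_›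
    · exact ⟨c, hxc, h'⟩

end Counting

section Counting2
variable {α : Type*} [DecidableEq α]

lemma count_le : ∀ (n : ℕ) (H F : Finset (α × α)), H.card ≤ n →
    (∀ p ∈ F, p.1 ≠ p.2) →
    (∀ p ∈ F, EqvGen (erel H) p.1 p.2) →
    (∀ p ∈ F, ∀ q ∈ F, p ≠ q → p.1 ≠ q.1 ∧ p.1 ≠ q.2 ∧ p.2 ≠ q.1 ∧ p.2 ≠ q.2) →
    F.card ≤ H.card := by
  intro n
  induction n with
  | zero =>
    intro H F hcard hne hconn _
    rcases F.eq_empty_or_nonempty with rfl | ⟨p, hp⟩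
    · simp
    · exfalso
      obtain ⟨z, hz, hrz⟩ := first_edge (eqvGen_to_rtg (erel_symm H) (hconn p hp)) (hne p hp)
      have : H ≠ ∅ := by
        rcases hrz with h | h <;> exact fun he => by simp [he] at h
      simp [Finset.card_eq_zero, ← Finset.card_eq_zero] at hcard
      exact this (Finset.card_eq_zero.mp hcard)
  | succ n ih =>
    intro H F hcard hne hconn hdisj
    rcases F.eq_empty_or_nonempty with rfl | ⟨p, hp⟩
    · simp
    obtain ⟨z, hz, hrz⟩ := first_edge (eqvGen_to_rtg (erel_symm H) (hconn p hp)) (hne p hp)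
    set x := p.1 with hxdef
    -- the chosen edge
    obtain ⟨h₀, hh₀, hends⟩ : ∃ h₀, h₀ ∈ H ∧ ((h₀ = (x, z)) ∨ (h₀ = (z, x))) := by
      rcases hrz with h | h
      · exact ⟨(x, z), h, Or.inl rfl⟩
      · exact ⟨(z, x), h, Or.inr rfl⟩
    set f : α → α := fun w => if w = z then x else w with hf
    have hfx : f x = x := by simp [hf, Ne.symm hz]  -- x ≠ z
    have hfz : f z = x := by simp [hf]
    have hcoll : ∀ u v, f u = f v → u = v ∨ (u = z ∧ v = x) ∨ (u = x ∧ v = z) := by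
      intro u v huv
      by_cases hu : u = z <;> by_cases hv : v = z <;> simp [hf, hu, hv] at huv ⊢ <;> tauto
    set H' : Finset (α × α) := (H.erase h₀).image (Prod.map f f) with hH'
    have hmap : ∀ q ∈ H, f q.1 = f q.2 ∨ (f q.1, f q.2) ∈ H' := by
      intro q hq
      by_cases hqe : q = h₀
      · subst hqe
        rcases hends with rfl | rfl <;> simp [hfx, hfz]
      · right
        exact Finset.mem_image.mpr ⟨q, Finset.mem_erase.mpr ⟨hqe, hq⟩, rfl⟩
    set F' : Finset (α × α) := (F.erase p).image (Prod.map f f) with hF'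
    -- vertices of pairs in F.erase p are distinct from x
    have hvx : ∀ q ∈ F.erase p, q.1 ≠ x ∧ q.2 ≠ x := by
      intro q hq
      obtain ⟨hqp, hqF⟩ := Finset.mem_erase.mp hq
      obtain ⟨h1, h2, h3, h4⟩ := hdisj q hqF p hp hqp
      exact ⟨h1, h3⟩
    have hfne : ∀ q ∈ F.erase p, f q.1 ≠ f q.2 := by
      intro q hq he
      obtain ⟨hx1, hx2⟩ := hvx q hq
      rcases hcoll _ _ he with h | ⟨_, h⟩ | ⟨h, _⟩
      · exact hne q (Finset.mem_erase.mp hq).2 h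
      · exact hx2 h
      · exact hx1 h
    have hfinj : ∀ q ∈ F.erase p, ∀ q' ∈ F.erase p, q ≠ q' →
        f q.1 ≠ f q'.1 ∧ f q.1 ≠ f q'.2 ∧ f q.2 ≠ f q'.1 ∧ f q.2 ≠ f q'.2 := by
      intro q hq q' hq' hqq'
      obtain ⟨hq1, hq2⟩ := hvx q hq
      obtain ⟨hq1', hq2'⟩ := hvx q' hq'
      obtain ⟨d1, d2, d3, d4⟩ := hdisj q (Finset.mem_erase.mp hq).2 q' (Finset.mem_erase.mp hq').2 hqq'
      refine ⟨?_, ?_, ?_, ?_⟩ <;> intro he <;>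
        [rcases hcoll _ _ he with h | ⟨_, h⟩ | ⟨h, _⟩;
         rcases hcoll _ _ he with h | ⟨_, h⟩ | ⟨h, _⟩;
         rcases hcoll _ _ he with h | ⟨_, h⟩ | ⟨h, _⟩;
         rcases hcoll _ _ he with h | ⟨_, h⟩ | ⟨h, _⟩] <;>
        first
          | exact d1 h | exact d2 h | exact d3 h | exact d4 h
          | exact hq1 h | exact hq2 h | exact hq1' h | exact hq2' h
    have hcardF' : F'.card = (F.erase p).card := by
      apply Finset.card_image_of_injOn
      intro q hq q' hq' he
      by_contra hqq'
      have := (hfinj q hq q' hq' hqq').1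
      exact this (congrArg Prod.fst he)
    have hHpos : 1 ≤ H.card := Finset.card_pos.mpr ⟨h₀, hh₀⟩
    have hcardH'' : H'.card ≤ H.card - 1 := by
      have h1 : H'.card ≤ (H.erase h₀).card := Finset.card_image_le
      have h2 : (H.erase h₀).card = H.card - 1 := Finset.card_erase_of_mem hh₀
      omega
    have hcardH' : H'.card ≤ n := by omega
    have hF'le : F'.card ≤ H'.card := by
      apply ih H' F' hcardH'
      · intro q' hq'
        obtain ⟨q, hq, rfl⟩ := Finset.mem_image.mp hq'
        exact hfne q hq
      · intro q' hq'
        obtain ⟨q, hq, rfl⟩ := Finset.mem_image.mp hq'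
        exact eqvGen_map f H H' hmap _ _ (hconn q (Finset.mem_erase.mp hq).2)
      · intro q' hq' q'' hq'' hne'
        obtain ⟨q1, hq1, rfl⟩ := Finset.mem_image.mp hq'
        obtain ⟨q2, hq2, rfl⟩ := Finset.mem_image.mp hq''
        have : q1 ≠ q2 := fun h => hne' (by rw [h])
        exact hfinj q1 hq1 q2 hq2 this
    have hFpos : 0 < F.card := Finset.card_pos.mpr ⟨p, hp⟩
    have : (F.erase p).card = F.card - 1 := Finset.card_erase_of_mem hp
    omega
set_option linter.unusedSectionVars false

section AuxProof
open Relation FreeMonoid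

namespace OrientedGraph

variable (G : OrientedGraph)

lemma isPath_nil {u v : G.V} (h : G.IsPath [] u v) : u = v := by
  rcases h with ⟨-, ⟨-, h⟩ | ⟨h, -⟩⟩
  · exact h
  · exact absurd rfl h

lemma isPath_one {e : G.E} {u v : G.V} (h : G.IsPath [e] u v) :
    u = G.o e ∧ v = G.t e := by
  rcases h with ⟨-, ⟨h, -⟩ | ⟨hne, h1, h2⟩⟩
  · simp at h
  · exact ⟨by simpa using h1, by simpa using h2⟩

lemma isPath_one' (e : G.E) : G.IsPath [e] (G.o e) (G.t e) := by
  exact ⟨List.isChain_singleton e, Or.inr ⟨by simp, by simp, by simp⟩⟩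

lemma isPath_two {e f : G.E} {u v : G.V} (h : G.IsPath [e, f] u v) :
    G.t e = G.o f ∧ u = G.o e ∧ v = G.t f := by
  rcases h with ⟨hc, ⟨h, -⟩ | ⟨hne, h1, h2⟩⟩
  · simp at h
  · refine ⟨?_, by simpa using h1, by simpa using h2⟩
    exact (List.isChain_pair (R := fun e f => G.t e = G.o f)).mp hc

lemma isPath_two' (e f : G.E) (h : G.t e = G.o f) :
    G.IsPath [e, f] (G.o e) (G.t f) := by
  refine ⟨?_, Or.inr ⟨by simp, by simp, by simp⟩⟩
  exact List.isChain_pair.mpr h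

/-- Any two distinct parallel paths form a rhomboid. -/
lemma parallel_paths (hnl : G.NoLoops) (hqa : G.QuasiAcyclic) (hpb : G.TwoPathBounded)
    (hme : ¬ G.HasMultipleEdges) (htr : ¬ G.HasTriangle) {p q : List G.E} {u v : G.V}
    (hp : G.IsPath p u v) (hq : G.IsPath q u v) :
    p = q ∨ ∃ a b c d, G.IsRhomboid (a, b, c, d) ∧ p = [a, b] ∧ q = [c, d] := by
  have no2cycle : ∀ e f : G.E, G.t e = G.o f → G.o e = G.t f → False := by
    intro e f h1 h2
    exact hqa (G.o e) (G.t e) (hnl e) [e] [f] (G.isPath_one' e)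
      (h1 ▸ h2 ▸ G.isPath_one' f)
  have hlp : p.length ≤ 2 := hpb p u v hp (fun e _ => hnl e)
  have hlq : q.length ≤ 2 := hpb q u v hq (fun e _ => hnl e)
  match p, q with
  | [], [] => exact Or.inl rfl
  | [], e :: q' =>
    exfalso
    have huv := G.isPath_nil hp
    match q' with
    | [] =>
      obtain ⟨h1, h2⟩ := G.isPath_one hq
      exact hnl e (h1 ▸ h2 ▸ huv)
    | [f] =>
      obtain ⟨h1, h2, h3⟩ := G.isPath_two hq
      exact no2cycle e f h1 (by rw [← h2, huv, h3])
  | e :: p', [] =>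
    exfalso
    have huv := G.isPath_nil hq
    match p' with
    | [] =>
      obtain ⟨h1, h2⟩ := G.isPath_one hp
      exact hnl e (h1 ▸ h2 ▸ huv)
    | [f] =>
      obtain ⟨h1, h2, h3⟩ := G.isPath_two hp
      exact no2cycle e f h1 (by rw [← h2, huv, h3])
  | [e], [f] =>
    by_cases hef : e = f
    · exact Or.inl (by rw [hef])
    · exfalso
      obtain ⟨h1, h2⟩ := G.isPath_one hp
      obtain ⟨h3, h4⟩ := G.isPath_one hq
      exact hme ⟨e, f, hef, by rw [← h2, h4], by rw [← h1, h3], Ne.symm (hnl e)⟩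
  | [e], [f, g] =>
    exfalso
    obtain ⟨h1, h2⟩ := G.isPath_one hp
    obtain ⟨h3, h4, h5⟩ := G.isPath_two hq
    exact htr ⟨e, f, g, by rw [← h1, h4], h3, by rw [← h2, h5], hnl e, hnl f, hnl g⟩
  | [e, f], [g] =>
    exfalso
    obtain ⟨h1, h2, h3⟩ := G.isPath_two hp
    obtain ⟨h4, h5⟩ := G.isPath_one hq
    exact htr ⟨g, e, f, by rw [← h4, h2], h1, by rw [← h3, h5], hnl g, hnl e, hnl f⟩
  | [a, b], [c, d] =>
    by_cases habcd : a = c ∧ b = d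
    · exact Or.inl (by rw [habcd.1, habcd.2])
    obtain ⟨h1, h2, h3⟩ := G.isPath_two hp   -- t a = o b, u = o a, v = t b
    obtain ⟨h4, h5, h6⟩ := G.isPath_two hq   -- t c = o d, u = o c, v = t d
    have R1 : G.o a = G.o c := by rw [← h2, h5]
    have R2 : G.t b = G.t d := by rw [← h3, h6]
    have R6 : G.o a ≠ G.o d := by
      intro h
      exact hnl c (by rw [← R1, h, ← h4])
    have R7 : G.o a ≠ G.t d := by
      intro h
      exact no2cycle a b h1 (by rw [h, ← R2])
    have R8 : G.t a ≠ G.o d := by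
      intro h
      by_cases hac : a = c
      · subst hac
        have hbd : b ≠ d := fun hbd => habcd ⟨rfl, hbd⟩
        exact hme ⟨b, d, hbd, R2, by rw [← h1, h], Ne.symm (hnl b)⟩
      · exact hme ⟨a, c, hac, by rw [h, ← h4], R1, Ne.symm (hnl a)⟩
    have R9 : G.t a ≠ G.t d := by
      intro h
      exact hnl b (by rw [← h1, h, ← R2])
    refine Or.inr ⟨a, b, c, d, ⟨R1, R2, h1, h4, hnl a, R6, R7, R8, R9, hnl d⟩, rfl, rfl⟩
  | _ :: _ :: _ :: _, _ => simp at hlp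
  | _, _ :: _ :: _ :: _ => simp at hlq


/-- The complete system consisting of all rhomboid relations. -/
noncomputable def allRels : Finset (List G.E × List G.E) := by
  classical
  exact (Finset.univ.filter (fun ρ : G.E × G.E × G.E × G.E => G.IsRhomboid ρ)).image
    (fun ρ => ([ρ.1, ρ.2.1], [ρ.2.2.1, ρ.2.2.2]))

lemma rhomboid_paths {a b c d : G.E} (h : G.IsRhomboid (a, b, c, d)) :
    G.IsPath [a, b] (G.o a) (G.t b) ∧ G.IsPath [c, d] (G.o a) (G.t b) := by
  obtain ⟨e1, e2, e3, e4, -⟩ := h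
  refine ⟨G.isPath_two' a b e3, ?_⟩
  have := G.isPath_two' c d e4
  rwa [← e1, ← e2] at this

lemma isComplete_allRels (hnl : G.NoLoops) (hqa : G.QuasiAcyclic) (hpb : G.TwoPathBounded)
    (hme : ¬ G.HasMultipleEdges) (htr : ¬ G.HasTriangle) : G.IsComplete G.allRels := by
  intro M _ l
  constructor
  · intro hcomm r hr
    simp only [allRels, Finset.mem_image, Finset.mem_filter] at hr
    obtain ⟨ρ, ⟨-, hρ⟩, rfl⟩ := hr
    obtain ⟨hp1, hp2⟩ := G.rhomboid_paths hρ
    exact hcomm _ _ _ _ hp1 hp2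
  · intro hrel u v p q hp hq
    rcases G.parallel_paths hnl hqa hpb hme htr hp hq with rfl | ⟨a, b, c, d, hρ, rfl, rfl⟩
    · rfl
    · refine hrel ([a, b], [c, d]) ?_
      simp only [allRels, Finset.mem_image, Finset.mem_filter]
      exact ⟨(a, b, c, d), ⟨Finset.mem_univ _, hρ⟩, rfl⟩

lemma labelProd_con (c : Con (FreeMonoid G.E)) (s : List G.E) :
    G.labelProd (fun e => c.mk' (FreeMonoid.of e)) s = c.mk' (FreeMonoid.ofList s) := by
  induction s with
  | nil =>
    show (1 : c.Quotient) = c.mk' (FreeMonoid.ofList [])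
    simp [FreeMonoid.ofList]; rfl
  | cons a t ih =>
    simp only [labelProd, List.map_cons, List.prod_cons, FreeMonoid.ofList_cons, map_mul]
    rw [← ih]; rfl

/-- The congruence recording length, and forcing equality in length `≤ 1`. -/
def lenCon : Con (FreeMonoid G.E) where
  r x y := x.toList.length = y.toList.length ∧ (x.toList.length ≤ 1 → x = y)
  iseqv := by
    constructor
    · exact fun x => ⟨rfl, fun _ => rfl⟩
    · rintro x y ⟨h1, h2⟩
      exact ⟨h1.symm, fun hl => (h2 (h1 ▸ hl)).symm⟩
    · rintro x y z ⟨h1, h2⟩ ⟨h3, h4⟩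
      exact ⟨h1.trans h3, fun hl => (h2 hl).trans (h4 (h1 ▸ hl))⟩
  mul' := by
    rintro w x y z ⟨h1, h2⟩ ⟨h3, h4⟩
    constructor
    · simp only [FreeMonoid.toList_mul, List.length_append]; omega
    · intro hl
      simp only [FreeMonoid.toList_mul, List.length_append] at hl
      rw [h2 (by omega), h4 (by omega)]

/-- One substitution step using a relation from `R`. -/
def stepRel (R : Finset (List G.E × List G.E)) :
    FreeMonoid G.E → FreeMonoid G.E → Prop := fun w w' =>
  ∃ r ∈ R, ∃ u v, w = u * FreeMonoid.ofList r.1 * v ∧ w' = u * FreeMonoid.ofList r.2 * v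

lemma stepRel_mul_right (R : Finset (List G.E × List G.E)) {a b : FreeMonoid G.E}
    (c : FreeMonoid G.E) (h : Relation.EqvGen (G.stepRel R) a b) :
    Relation.EqvGen (G.stepRel R) (a * c) (b * c) := by
  induction h with
  | rel x y hxy =>
    obtain ⟨r, hr, u, v, rfl, rfl⟩ := hxy
    exact Relation.EqvGen.rel _ _ ⟨r, hr, u, v * c, by rw [mul_assoc], by rw [mul_assoc]⟩
  | refl x => exact Relation.EqvGen.refl _
  | symm x y _ ih => exact ih.symm _ _
  | trans x y z _ _ ih1 ih2 => exact ih1.trans _ _ _ ih2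

lemma stepRel_mul_left (R : Finset (List G.E × List G.E)) {a b : FreeMonoid G.E}
    (c : FreeMonoid G.E) (h : Relation.EqvGen (G.stepRel R) a b) :
    Relation.EqvGen (G.stepRel R) (c * a) (c * b) := by
  induction h with
  | rel x y hxy =>
    obtain ⟨r, hr, u, v, rfl, rfl⟩ := hxy
    refine Relation.EqvGen.rel _ _ ⟨r, hr, c * u, v, by rw [← mul_assoc, ← mul_assoc], by rw [← mul_assoc, ← mul_assoc]⟩
  | refl x => exact Relation.EqvGen.refl _
  | symm x y _ ih => exact ih.symm _ _
  | trans x y z _ _ ih1 ih2 => exact ih1.trans _ _ _ ih2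

/-- The congruence generated by one-step substitutions. -/
def stepCon (R : Finset (List G.E × List G.E)) : Con (FreeMonoid G.E) where
  r := Relation.EqvGen (G.stepRel R)
  iseqv := Relation.EqvGen.is_equivalence _
  mul' := by
    intro w x y z h1 h2
    exact (G.stepRel_mul_right R y h1).trans _ _ _ (G.stepRel_mul_left R x h2)

lemma step_extract (R : Finset (List G.E × List G.E))
    (hlen : ∀ r ∈ R, r.1.length = r.2.length ∧ (r.1.length ≤ 1 → r.1 = r.2))
    {w w' : FreeMonoid G.E} (h : Relation.EqvGen (G.stepRel R) w w') :
    w.toList.length = w'.toList.length ∧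
      (w.toList.length = 2 → Relation.EqvGen
        (erel (R.filter (fun r => r.1.length = 2 ∧ r.2.length = 2)))
        w.toList w'.toList) := by
  classical
  induction h with
  | rel x y hxy =>
    obtain ⟨r, hr, u, v, rfl, rfl⟩ := hxy
    obtain ⟨hl1, hl2⟩ := hlen r hr
    have hx : (u * FreeMonoid.ofList r.1 * v).toList = u.toList ++ r.1 ++ v.toList := by
      simp [FreeMonoid.toList_mul]
    have hy : (u * FreeMonoid.ofList r.2 * v).toList = u.toList ++ r.2 ++ v.toList := by
      simp [FreeMonoid.toList_mul]
    constructor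
    · rw [hx, hy]; simp [hl1]
    · intro h2
      rw [hx] at h2; simp only [List.length_append] at h2
      by_cases hs : r.1.length ≤ 1
      · rw [hl2 hs]
        exact Relation.EqvGen.refl _
      · have h1eq : u.toList = [] ∧ v.toList = [] ∧ r.1.length = 2 := by
          constructor
          · rw [← List.length_eq_zero_iff]; omega
          · exact ⟨by rw [← List.length_eq_zero_iff]; omega, by omega⟩
        obtain ⟨hu, hv, hr1⟩ := h1eq
        rw [hx, hy, hu, hv]
        simp only [List.append_nil, List.nil_append]
        refine Relation.EqvGen.rel _ _ (Or.inl ?_)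
        exact Finset.mem_filter.mpr ⟨hr, hr1, hl1.symm.trans hr1⟩
  | refl x => exact ⟨rfl, fun _ => Relation.EqvGen.refl _⟩
  | symm x y _ ih =>
    exact ⟨ih.1.symm, fun h2 => (ih.2 (ih.1.trans h2)).symm _ _⟩
  | trans x y z _ _ ih1 ih2 =>
    exact ⟨ih1.1.trans ih2.1, fun h2 => (ih1.2 h2).trans _ _ _ (ih2.2 (ih1.1.symm.trans h2))⟩


end OrientedGraph
end AuxProof

/-- Theorem: if `G` is quasi-acyclic, 2-path-bounded, without loops, multiple edges
and triangles, then `η(G) ≥ 𝔯𝔥(G)`. -/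
theorem eta_ge_rhNum_of_noLoops (G : OrientedGraph) (hnl : G.NoLoops) (hqa : G.QuasiAcyclic)
    (hpb : G.TwoPathBounded) (hme : ¬ G.HasMultipleEdges) (htr : ¬ G.HasTriangle) :
    G.rhNum ≤ G.eta := by
  classical
  -- a complete system of minimum cardinality exists
  have hex : {n : ℕ | ∃ R : Finset (List G.E × List G.E), G.IsComplete R ∧ R.card = n}.Nonempty :=
    ⟨G.allRels.card, G.allRels, G.isComplete_allRels hnl hqa hpb hme htr, rfl⟩
  obtain ⟨R₀, hR₀, hR₀card⟩ := Nat.sInf_mem hex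
  have hetadef : G.eta = sInf {n : ℕ | ∃ R : Finset (List G.E × List G.E),
      G.IsComplete R ∧ R.card = n} := rfl
  -- every relation of `R₀` relates words of equal length, and equal words in length ≤ 1
  have hcommC : G.IsCommutative (fun e => (conGen (fun x y : FreeMonoid G.E =>
      ∃ a b c d, G.IsRhomboid (a, b, c, d) ∧ x = FreeMonoid.ofList [a, b] ∧
        y = FreeMonoid.ofList [c, d])).mk' (FreeMonoid.of e)) := by
    intro u v p q hp hq
    rcases G.parallel_paths hnl hqa hpb hme htr hp hq with rfl | ⟨a, b, c, d, hρ, rfl, rfl⟩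
    · rfl
    · rw [G.labelProd_con, G.labelProd_con]
      exact (Con.eq _).mpr (ConGen.Rel.of _ _ ⟨a, b, c, d, hρ, rfl, rfl⟩)
  have hlen : ∀ r ∈ R₀, r.1.length = r.2.length ∧ (r.1.length ≤ 1 → r.1 = r.2) := by
    intro r hr
    have hrel := ((hR₀ _ _).mp hcommC) r hr
    rw [G.labelProd_con, G.labelProd_con] at hrel
    have hC := (Con.eq _).mp hrel
    have hCle : (conGen (fun x y : FreeMonoid G.E =>
        ∃ a b c d, G.IsRhomboid (a, b, c, d) ∧ x = FreeMonoid.ofList [a, b] ∧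
          y = FreeMonoid.ofList [c, d])) ≤ G.lenCon := by
      apply Con.conGen_le.mpr
      rintro x y ⟨a, b, c, d, hρ, rfl, rfl⟩
      exact ⟨by simp, by simp⟩
    have h := hCle hC
    obtain ⟨h1, h2⟩ := h
    simp only [FreeMonoid.toList_ofList] at h1 h2
    exact ⟨h1, fun hl => FreeMonoid.ofList.injective (h2 hl)⟩
  -- the diagram labeled in the quotient by the relations of `R₀` is commutative
  have hcommR : G.IsCommutative (fun e => (conGen (fun x y : FreeMonoid G.E =>
      ∃ r ∈ R₀, x = FreeMonoid.ofList r.1 ∧ y = FreeMonoid.ofList r.2)).mk'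
        (FreeMonoid.of e)) := by
    refine (hR₀ _ _).mpr ?_
    intro r hr
    rw [G.labelProd_con, G.labelProd_con]
    exact (Con.eq _).mpr (ConGen.Rel.of _ _ ⟨r, hr, rfl, rfl⟩)
  have hRle : (conGen (fun x y : FreeMonoid G.E =>
      ∃ r ∈ R₀, x = FreeMonoid.ofList r.1 ∧ y = FreeMonoid.ofList r.2)) ≤ G.stepCon R₀ := by
    apply Con.conGen_le.mpr
    rintro x y ⟨r, hr, rfl, rfl⟩
    exact Relation.EqvGen.rel _ _ ⟨r, hr, 1, 1, by simp, by simp⟩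
  -- key connectivity fact for each rhomboid
  have key : ∀ a b c d : G.E, G.IsRhomboid (a, b, c, d) →
      Relation.EqvGen (erel (R₀.filter (fun r => r.1.length = 2 ∧ r.2.length = 2)))
        [a, b] [c, d] := by
    intro a b c d hρ
    obtain ⟨hp1, hp2⟩ := G.rhomboid_paths hρ
    have hlab := hcommR _ _ _ _ hp1 hp2
    rw [G.labelProd_con, G.labelProd_con] at hlab
    have hcon : Relation.EqvGen (G.stepRel R₀)
        (FreeMonoid.ofList [a, b]) (FreeMonoid.ofList [c, d]) :=
      hRle ((Con.eq _).mp hlab)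
    have hext := (G.step_extract R₀ hlen hcon).2 (by simp)
    simpa using hext
  -- bound every cardinality of a disjoint family of rhomboids
  have hbound : ∀ n ∈ {n : ℕ | ∃ F : Finset (G.E × G.E × G.E × G.E),
      (∀ r ∈ F, G.IsRhomboid r) ∧
      (∀ r ∈ F, ∀ r' ∈ F, r ≠ r' → G.RhDisjoint r r') ∧ F.card = n}, n ≤ G.eta := by
    rintro n ⟨F, hF1, hF2, rfl⟩
    have listne : ∀ x1 x2 y1 y2 : G.E, (x1 ≠ y1 ∨ x2 ≠ y2) → [x1, x2] ≠ [y1, y2] := by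
      intro x1 x2 y1 y2 h he
      simp only [List.cons.injEq, and_true] at he
      tauto
    set toP : G.E × G.E × G.E × G.E → List G.E × List G.E :=
      fun ρ => ([ρ.1, ρ.2.1], [ρ.2.2.1, ρ.2.2.2]) with htoP
    have himg : ∀ ρ ρ', toP ρ = toP ρ' →
        ρ.1 = ρ'.1 ∧ ρ.2.1 = ρ'.2.1 ∧ ρ.2.2.1 = ρ'.2.2.1 ∧ ρ.2.2.2 = ρ'.2.2.2 := by
      intro ρ ρ' he
      simp only [htoP, Prod.ext_iff, List.cons.injEq, and_true] at he
      tauto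
    have hinj : Set.InjOn toP F := by
      intro ρ hρ ρ' hρ' he
      by_contra hne'
      obtain ⟨e1, e2, e3, e4⟩ := himg ρ ρ' he
      rcases (hF2 ρ hρ ρ' hρ' hne').1 with h | h
      · exact h e1
      · exact h e2
    set F' : Finset (List G.E × List G.E) := F.image toP with hF'
    set H : Finset (List G.E × List G.E) :=
      R₀.filter (fun r => r.1.length = 2 ∧ r.2.length = 2) with hH
    have hcount : F'.card ≤ H.card := by
      apply count_le H.card H F' le_rfl
      · intro p hp
        obtain ⟨ρ, hρ, rfl⟩ := Finset.mem_image.mp hp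
        obtain ⟨e1, e2, e3, e4, n5, n6, n7, n8, n9, n10⟩ := hF1 ρ hρ
        refine listne _ _ _ _ ?_
        right
        intro h
        exact n8 (e3.trans (h ▸ rfl))
      · intro p hp
        obtain ⟨ρ, hρ, rfl⟩ := Finset.mem_image.mp hp
        exact key ρ.1 ρ.2.1 ρ.2.2.1 ρ.2.2.2 (hF1 ρ hρ)
      · intro p hp q hq hpq
        obtain ⟨ρ, hρ, rfl⟩ := Finset.mem_image.mp hp
        obtain ⟨ρ', hρ', rfl⟩ := Finset.mem_image.mp hq
        have hne' : ρ ≠ ρ' := fun h => hpq (by rw [h])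
        obtain ⟨d1, d2, d3, d4⟩ := hF2 ρ hρ ρ' hρ' hne'
        exact ⟨listne _ _ _ _ d1, listne _ _ _ _ d2, listne _ _ _ _ d4, listne _ _ _ _ d3⟩
    have hcardF : F'.card = F.card := Finset.card_image_of_injOn hinj
    have hHR : H.card ≤ R₀.card := Finset.card_filter_le _ _
    omega
  rw [OrientedGraph.rhNum]
  exact csSup_le ⟨0, ∅, by simp, by simp, rfl⟩ hbound
end Counting2
end

section
/- Let G = (V, E) be a quasi-acyclic 2-path-bounded oriented graph without loops, multiple edges and triangles, and let D = (G, l) be a diagram over a monoid M. Then D is commutative if and only if for any two paths p₁, p₂ in G with the same origin and the same tail and satisfying |p₁| = |p₂| = 2, the equality l(p₁) = l(p₂) holds. -/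
namespace OrientedGraph

lemma isPath_nil_iff (G : OrientedGraph) (u v : G.V) : G.IsPath [] u v ↔ u = v := by
  constructor
  · rintro ⟨-, h | ⟨h, -⟩⟩
    · exact h.2
    · exact absurd rfl h
  · rintro rfl; exact ⟨List.isChain_nil, Or.inl ⟨rfl, rfl⟩⟩

lemma isPath_single (G : OrientedGraph) {e : G.E} {u v : G.V}
    (h : G.IsPath [e] u v) : u = G.o e ∧ v = G.t e := by
  rcases h with ⟨-, h | ⟨h, h1, h2⟩⟩
  · simp at h
  · exact ⟨h1, h2⟩

lemma isPath_cons (G : OrientedGraph) {e : G.E} {p : List G.E} {u v : G.V}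
    (h : G.IsPath (e :: p) u v) : u = G.o e ∧ G.IsPath p (G.t e) v := by
  rcases h with ⟨hc, h | ⟨h, h1, h2⟩⟩
  · simp at h
  · refine ⟨h1, ?_⟩
    rcases p with _ | ⟨f, q⟩
    · exact ⟨List.isChain_nil, Or.inl ⟨rfl, by simpa using h2.symm⟩⟩
    · have hc := List.isChain_cons.mp hc
      refine ⟨hc.2, Or.inr ⟨by simp, hc.1 f rfl, ?_⟩⟩
      rw [h2, List.getLast_cons (by simp : f :: q ≠ [])]

lemma isPath_singleton (G : OrientedGraph) (e : G.E) :
    G.IsPath [e] (G.o e) (G.t e) :=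
  ⟨List.isChain_singleton e, Or.inr ⟨by simp, rfl, rfl⟩⟩

/-- In a loopless quasi-acyclic graph, any path from a vertex to itself is empty. -/
lemma path_self_nil (G : OrientedGraph) (hnl : G.NoLoops) (hqa : G.QuasiAcyclic)
    {p : List G.E} {u : G.V} (h : G.IsPath p u u) : p = [] := by
  rcases p with _ | ⟨e, q⟩
  · rfl
  · exfalso
    obtain ⟨hu, hq⟩ := G.isPath_cons h
    subst hu
    exact hqa (G.o e) (G.t e) (hnl e) [e] q (G.isPath_singleton e) hq

end OrientedGraph

/-- Theorem: for a quasi-acyclic, 2-path-bounded graph without loops, multiple edges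
and triangles, a diagram is commutative iff all pairs of length-2 paths with the same
endpoints have equal labels. -/
theorem commutative_iff_length_two_paths (G : OrientedGraph) (hnl : G.NoLoops) (hqa : G.QuasiAcyclic)
    (hpb : G.TwoPathBounded) (hme : ¬ G.HasMultipleEdges) (htr : ¬ G.HasTriangle)
    (M : Type) [Monoid M] (l : G.E → M) :
    G.IsCommutative l ↔
      ∀ (u v : G.V) (p₁ p₂ : List G.E), G.IsPath p₁ u v → G.IsPath p₂ u v →
        p₁.length = 2 → p₂.length = 2 → G.labelProd l p₁ = G.labelProd l p₂ := by
  constructor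
  · intro h u v p₁ p₂ h1 h2 _ _
    exact h u v p₁ p₂ h1 h2
  · intro H u v p₁ p₂ h1 h2
    by_cases huv : u = v
    · subst huv
      rw [G.path_self_nil hnl hqa h1, G.path_self_nil hnl hqa h2]
    · have hb1 : p₁.length ≤ 2 := hpb p₁ u v h1 (fun e _ => hnl e)
      have hb2 : p₂.length ≤ 2 := hpb p₂ u v h2 (fun e _ => hnl e)
      have hn1 : p₁ ≠ [] := fun h => huv ((G.isPath_nil_iff u v).mp (h ▸ h1))
      have hn2 : p₂ ≠ [] := fun h => huv ((G.isPath_nil_iff u v).mp (h ▸ h2))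
      -- helper for the mixed case: a single edge and a 2-path give a triangle
      have tri : ∀ (a b c : G.E), G.IsPath [a] u v → G.IsPath [b, c] u v → False := by
        intro a b c ha hbc
        obtain ⟨hau, hav⟩ := G.isPath_single ha
        obtain ⟨hbu, hrest⟩ := G.isPath_cons hbc
        obtain ⟨hbc', hcv⟩ := G.isPath_single hrest
        exact htr ⟨a, b, c, by rw [← hau, ← hbu], hbc', by rw [← hcv, ← hav],
          fun h => hnl a h, fun h => hnl b h, fun h => hnl c h⟩
      rcases p₁ with _ | ⟨a, _ | ⟨b, _ | ⟨x, r⟩⟩⟩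
      · exact absurd rfl hn1
      · rcases p₂ with _ | ⟨c, _ | ⟨d, _ | ⟨y, s⟩⟩⟩
        · exact absurd rfl hn2
        · -- two single edges: equal, else multiple edges
          obtain ⟨hau, hav⟩ := G.isPath_single h1
          obtain ⟨hcu, hcv⟩ := G.isPath_single h2
          have : a = c := by
            by_contra hne
            exact hme ⟨a, c, hne, by rw [← hav, ← hcv], by rw [← hau, ← hcu],
              by rw [← hav, ← hau]; exact fun h => huv h.symm⟩
          rw [this]
        · exact absurd (tri a c d h1 h2) (fun h => h)
        · simp at hb2
      · rcases p₂ with _ | ⟨c, _ | ⟨d, _ | ⟨y, s⟩⟩⟩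
        · exact absurd rfl hn2
        · exact absurd (tri c a b h2 h1) (fun h => h)
        · exact H u v [a, b] [c, d] h1 h2 rfl rfl
        · simp at hb2
      · simp at hb1
end
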